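/- For a domain X, the poset FX of Scott-open filters of X, ordered by inclusion, is a continuous dcpo in which the way-below relation is characterized by: β ≪ α in FX iff there exists x ∈ X with x ∈ α and β ⊆ ↑x. -/
import Mathlib


def IsDcpoP (X : Type*) [Preorder X] : Prop :=
  ∀ D : Set X, D.Nonempty → DirectedOn (· ≤ ·) D → ∃ s, IsLUB D s

def wayBelow {X : Type*} [Preorder X] (y x : X) : Prop :=
  ∀ D : Set X, D.Nonempty → DirectedOn (· ≤ ·) D →
    ∀ s, IsLUB D s → x ≤ s → ∃ d ∈ D, y ≤ d

/-- A domain: a continuous dcpo. -/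
def IsContDomain (X : Type*) [Preorder X] : Prop :=
  IsDcpoP X ∧
  ∀ x : X, ({y | wayBelow y x}).Nonempty ∧
    DirectedOn (· ≤ ·) {y | wayBelow y x} ∧ IsLUB {y | wayBelow y x} x

def IsScottOpenFilter {X : Type*} [Preorder X] (α : Set X) : Prop :=
  α.Nonempty ∧
  (∀ ⦃a b : X⦄, a ≤ b → a ∈ α → b ∈ α) ∧
  (∀ a ∈ α, ∀ b ∈ α, ∃ c ∈ α, c ≤ a ∧ c ≤ b) ∧
  (∀ D : Set X, D.Nonempty → DirectedOn (· ≤ ·) D →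
    ∀ s, IsLUB D s → s ∈ α → ∃ d ∈ D, d ∈ α)

/-- The poset of Scott-open filters of `X`, ordered by inclusion. -/
abbrev SOF (X : Type*) [Preorder X] := {α : Set X // IsScottOpenFilter α}

section Aux

variable {X : Type*} [PartialOrder X]

lemma wb_le {y x : X} (h : wayBelow y x) : y ≤ x := by
  obtain ⟨d, hd, hyd⟩ := h {x} ⟨x, rfl⟩
    (fun a ha b hb => ⟨x, rfl, by simp_all, by simp_all⟩) x isLUB_singleton le_rfl
  simp only [Set.mem_singleton_iff] at hd
  subst hd; exact hyd

lemma wb_mono {y' y x x' : X} (hy : y' ≤ y) (h : wayBelow y x) (hx : x ≤ x') :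
    wayBelow y' x' := fun D hD hdD s hs hxs =>
  let ⟨d, hd, hyd⟩ := h D hD hdD s hs (hx.trans hxs)
  ⟨d, hd, hy.trans hyd⟩

lemma wb_interp (hX : IsContDomain X) {y x : X} (h : wayBelow y x) :
    ∃ z, wayBelow y z ∧ wayBelow z x := by
  set D : Set X := {z | ∃ w, wayBelow z w ∧ wayBelow w x} with hDdef
  obtain ⟨hne, hdir, hlub⟩ := hX.2 x
  have hDne : D.Nonempty := by
    obtain ⟨w, hw⟩ := hne
    obtain ⟨z, hz⟩ := (hX.2 w).1
    exact ⟨z, w, hz, hw⟩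
  have hDdir : DirectedOn (· ≤ ·) D := by
    rintro z1 ⟨w1, hz1, hw1⟩ z2 ⟨w2, hz2, hw2⟩
    obtain ⟨w3, hw3, h13, h23⟩ := hdir w1 hw1 w2 hw2
    obtain ⟨hne3, hdir3, hlub3⟩ := hX.2 w3
    obtain ⟨d1, hd1, hzd1⟩ :=
      (wb_mono le_rfl hz1 h13) {y | wayBelow y w3} hne3 hdir3 w3 hlub3 le_rfl
    obtain ⟨d2, hd2, hzd2⟩ :=
      (wb_mono le_rfl hz2 h23) {y | wayBelow y w3} hne3 hdir3 w3 hlub3 le_rfl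
    obtain ⟨d3, hd3, h13', h23'⟩ := hdir3 d1 hd1 d2 hd2
    exact ⟨d3, ⟨w3, hd3, hw3⟩, hzd1.trans h13', hzd2.trans h23'⟩
  have hDlub : IsLUB D x := by
    constructor
    · rintro z ⟨w, hzw, hwx⟩
      exact (wb_le hzw).trans (wb_le hwx)
    · intro u hu
      refine hlub.2 fun w hw => ?_
      exact (hX.2 w).2.2.2 fun z hz => hu ⟨w, hz, hw⟩
  obtain ⟨d, ⟨w, hdw, hwx⟩, hyd⟩ := h D hDne hDdir x hDlub le_rfl
  exact ⟨w, wb_mono hyd hdw le_rfl, hwx⟩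

lemma exists_wb (hX : IsContDomain X) {α : Set X} (hα : IsScottOpenFilter α)
    {z : X} (hz : z ∈ α) : ∃ w ∈ α, wayBelow w z := by
  obtain ⟨hne, hdir, hlub⟩ := hX.2 z
  obtain ⟨d, hd, hdα⟩ := hα.2.2.2 {y | wayBelow y z} hne hdir z hlub hz
  exact ⟨d, hdα, hd⟩

lemma sof_chain (hX : IsContDomain X) {α : Set X} (hα : IsScottOpenFilter α)
    {w z : X} (hwz : wayBelow w z) (hz : z ∈ α) :
    ∃ f : ℕ → X, f 0 = z ∧
      ∀ n, wayBelow w (f n) ∧ f n ∈ α ∧ wayBelow (f (n + 1)) (f n) := by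
  have step : ∀ p : X, wayBelow w p → p ∈ α →
      ∃ q, wayBelow w q ∧ q ∈ α ∧ wayBelow q p := by
    intro p hwp hp
    obtain ⟨c, hwc, hcp⟩ := wb_interp hX hwp
    obtain ⟨hne, hdir, hlub⟩ := hX.2 p
    obtain ⟨d, hd, hdα⟩ := hα.2.2.2 {y | wayBelow y p} hne hdir p hlub hp
    obtain ⟨e, he, hce, hde⟩ := hdir c hcp d hd
    exact ⟨e, wb_mono le_rfl hwc hce, hα.2.1 hde hdα, he⟩
  choose g hg1 hg2 hg3 using
    fun p : {p : X // wayBelow w p ∧ p ∈ α} => step p.1 p.2.1 p.2.2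
  let g' : {p : X // wayBelow w p ∧ p ∈ α} → {p : X // wayBelow w p ∧ p ∈ α} :=
    fun p => ⟨g p, hg1 p, hg2 p⟩
  let F : ℕ → {p : X // wayBelow w p ∧ p ∈ α} := fun n => g'^[n] ⟨z, hwz, hz⟩
  refine ⟨fun n => (F n).1, rfl, fun n => ⟨(F n).2.1, (F n).2.2, ?_⟩⟩
  have hF : F (n + 1) = g' (F n) := Function.iterate_succ_apply' g' n _
  show wayBelow (F (n + 1)).1 (F n).1
  rw [hF]
  exact hg3 (F n)

/-- Master construction: combine two (possibly empty) "open filter-like" sets bounded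
below by elements above `z` with an interpolating chain filter. -/
lemma sof_big (hX : IsContDomain X) {α : Set X} (hα : IsScottOpenFilter α)
    (F₁ F₂ : Set X) {x₁ x₂ w z : X}
    (hup₁ : ∀ ⦃a b : X⦄, a ≤ b → a ∈ F₁ → b ∈ F₁)
    (hup₂ : ∀ ⦃a b : X⦄, a ≤ b → a ∈ F₂ → b ∈ F₂)
    (hop₁ : ∀ D : Set X, D.Nonempty → DirectedOn (· ≤ ·) D →
      ∀ s, IsLUB D s → s ∈ F₁ → ∃ d ∈ D, d ∈ F₁)
    (hop₂ : ∀ D : Set X, D.Nonempty → DirectedOn (· ≤ ·) D →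
      ∀ s, IsLUB D s → s ∈ F₂ → ∃ d ∈ D, d ∈ F₂)
    (hb₁ : F₁ ⊆ {y | x₁ ≤ y}) (hb₂ : F₂ ⊆ {y | x₂ ≤ y})
    (hz1 : z ≤ x₁) (hz2 : z ≤ x₂) (hwz : wayBelow w z) (hzα : z ∈ α) :
    ∃ G : Set X, IsScottOpenFilter G ∧ F₁ ⊆ G ∧ F₂ ⊆ G ∧ z ∈ G ∧
      G ⊆ {y | w ≤ y} := by
  obtain ⟨f, hf0, hf⟩ := sof_chain hX hα hwz hzα
  have hmono : ∀ m n : ℕ, m ≤ n → f n ≤ f m := by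
    intro m n h
    induction n with
    | zero =>
      have : m = 0 := Nat.le_zero.mp h
      subst this; exact le_rfl
    | succ k ih =>
      rcases Nat.lt_or_ge m (k + 1) with h' | h'
      · exact (wb_le (hf k).2.2).trans (ih (Nat.lt_succ_iff.mp h'))
      · have : m = k + 1 := le_antisymm h h'
        subst this; exact le_rfl
  set C : Set X := {y | ∃ n, wayBelow (f (n + 1)) y} with hCdef
  set G : Set X := F₁ ∪ F₂ ∪ C with hGdef
  have hfC : ∀ n, f n ∈ C := fun n => ⟨n, (hf n).2.2⟩
  have hzG : z ∈ G := by
    have : f 0 ∈ C := hfC 0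
    rw [hf0] at this
    exact Or.inr this
  have hkey : ∀ a ∈ G, ∃ n, f n ≤ a := by
    rintro a (⟨h | h⟩ | ⟨n, h⟩)
    · exact ⟨0, by rw [hf0]; exact hz1.trans (hb₁ h)⟩
    · exact ⟨0, by rw [hf0]; exact hz2.trans (hb₂ h)⟩
    · exact ⟨n + 1, wb_le h⟩
  refine ⟨G, ⟨⟨z, hzG⟩, ?_, ?_, ?_⟩,
    fun a ha => Or.inl (Or.inl ha), fun a ha => Or.inl (Or.inr ha), hzG, ?_⟩
  · -- upward closed
    rintro a b hab (⟨h | h⟩ | ⟨n, h⟩)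
    · exact Or.inl (Or.inl (hup₁ hab h))
    · exact Or.inl (Or.inr (hup₂ hab h))
    · exact Or.inr ⟨n, wb_mono le_rfl h hab⟩
  · -- filtered
    intro a ha b hb
    obtain ⟨n, hn⟩ := hkey a ha
    obtain ⟨m, hm⟩ := hkey b hb
    refine ⟨f (max n m + 1), Or.inr (hfC _), ?_, ?_⟩
    · exact (hmono n (max n m + 1) ((le_max_left n m).trans (Nat.le_succ _))).trans hn
    · exact (hmono m (max n m + 1) ((le_max_right n m).trans (Nat.le_succ _))).trans hm
  · -- Scott open
    rintro D hD hdD s hs (⟨h | h⟩ | ⟨n, h⟩)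
    · obtain ⟨d, hd, hd'⟩ := hop₁ D hD hdD s hs h
      exact ⟨d, hd, Or.inl (Or.inl hd')⟩
    · obtain ⟨d, hd, hd'⟩ := hop₂ D hD hdD s hs h
      exact ⟨d, hd, Or.inl (Or.inr hd')⟩
    · obtain ⟨c, hfc, hcs⟩ := wb_interp hX h
      obtain ⟨d, hd, hcd⟩ := hcs D hD hdD s hs le_rfl
      exact ⟨d, hd, Or.inr ⟨n, wb_mono le_rfl hfc hcd⟩⟩
  · -- bounded below by w
    rintro a (⟨h | h⟩ | ⟨n, h⟩)
    · exact ((wb_le hwz).trans (hz1.trans (hb₁ h)) : w ≤ a)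
    · exact ((wb_le hwz).trans (hz2.trans (hb₂ h)) : w ≤ a)
    · exact (wb_le (hf (n + 1)).1).trans (wb_le h)

lemma sof_iUnion {G : Set (SOF X)} (hne : G.Nonempty)
    (hdir : DirectedOn (· ≤ ·) G) :
    IsScottOpenFilter (⋃ γ ∈ G, γ.1) := by
  obtain ⟨γ₀, hγ₀⟩ := hne
  obtain ⟨y₀, hy₀⟩ := γ₀.2.1
  refine ⟨⟨y₀, Set.mem_biUnion hγ₀ hy₀⟩, ?_, ?_, ?_⟩
  · rintro a b hab ha
    obtain ⟨γ, hγ, haγ⟩ := Set.mem_iUnion₂.mp ha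
    exact Set.mem_biUnion hγ (γ.2.2.1 hab haγ)
  · intro a ha b hb
    obtain ⟨γ₁, hγ₁, ha₁⟩ := Set.mem_iUnion₂.mp ha
    obtain ⟨γ₂, hγ₂, hb₂⟩ := Set.mem_iUnion₂.mp hb
    obtain ⟨γ₃, hγ₃, h13, h23⟩ := hdir γ₁ hγ₁ γ₂ hγ₂
    obtain ⟨c, hc, hca, hcb⟩ := γ₃.2.2.2.1 a (h13 ha₁) b (h23 hb₂)
    exact ⟨c, Set.mem_biUnion hγ₃ hc, hca, hcb⟩
  · intro D hD hdD s hs hsU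
    obtain ⟨γ, hγ, hsγ⟩ := Set.mem_iUnion₂.mp hsU
    obtain ⟨d, hd, hdγ⟩ := γ.2.2.2.2 D hD hdD s hs hsγ
    exact ⟨d, hd, Set.mem_biUnion hγ hdγ⟩

lemma sof_iUnion_isLUB {G : Set (SOF X)} (hne : G.Nonempty)
    (hdir : DirectedOn (· ≤ ·) G) :
    IsLUB G (⟨⋃ γ ∈ G, γ.1, sof_iUnion hne hdir⟩ : SOF X) := by
  constructor
  · intro γ hγ
    exact fun y hy => Set.mem_biUnion hγ hy
  · intro u hu
    intro y hy
    obtain ⟨γ, hγ, hyγ⟩ := Set.mem_iUnion₂.mp hy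
    exact hu hγ hyγ

/-- The set of "way-below approximants" of `α` in `SOF X`. -/
def sofD (X : Type*) [PartialOrder X] (α : SOF X) : Set (SOF X) :=
  {γ | ∃ x ∈ α.1, γ.1 ⊆ {y | x ≤ y}}

lemma sofD_cov (hX : IsContDomain X) (α : SOF X) :
    α.1 ⊆ ⋃ γ ∈ sofD X α, γ.1 := by
  intro y hy
  obtain ⟨w, hwα, hwy⟩ := exists_wb hX α.2 hy
  obtain ⟨Gs, hGs, -, -, hzG, hbound⟩ :=
    sof_big hX α.2 (∅ : Set X) (∅ : Set X) (x₁ := y) (x₂ := y)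
      (by simp) (by simp) (by simp) (by simp)
      (by simp) (by simp) le_rfl le_rfl hwy hy
  exact Set.mem_biUnion (show (⟨Gs, hGs⟩ : SOF X) ∈ sofD X α from ⟨w, hwα, hbound⟩) hzG

lemma sofD_dir (hX : IsContDomain X) (α : SOF X) :
    DirectedOn (· ≤ ·) (sofD X α) := by
  rintro γ₁ ⟨x₁, hx₁, hb₁⟩ γ₂ ⟨x₂, hx₂, hb₂⟩
  obtain ⟨z, hzα, hz1, hz2⟩ := α.2.2.2.1 x₁ hx₁ x₂ hx₂
  obtain ⟨w, hwα, hwz⟩ := exists_wb hX α.2 hzα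
  obtain ⟨Gs, hGs, h1, h2, -, hbound⟩ :=
    sof_big hX α.2 γ₁.1 γ₂.1 γ₁.2.2.1 γ₂.2.2.1 γ₁.2.2.2.2 γ₂.2.2.2.2
      hb₁ hb₂ hz1 hz2 hwz hzα
  exact ⟨⟨Gs, hGs⟩, ⟨w, hwα, hbound⟩, h1, h2⟩

lemma sofD_ne (hX : IsContDomain X) (α : SOF X) : (sofD X α).Nonempty := by
  obtain ⟨y, hy⟩ := α.2.1
  obtain ⟨γ, hγ, -⟩ := Set.mem_iUnion₂.mp (sofD_cov hX α hy)
  exact ⟨γ, hγ⟩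

lemma sof_char (hX : IsContDomain X) (α β : SOF X) :
    (∀ G : Set (SOF X), G.Nonempty → DirectedOn (· ≤ ·) G →
        α.1 ⊆ ⋃ γ ∈ G, γ.1 → ∃ γ ∈ G, β.1 ⊆ γ.1) ↔
      ∃ x ∈ α.1, β.1 ⊆ {y | x ≤ y} := by
  constructor
  · intro h
    obtain ⟨γ, hγ, hβγ⟩ :=
      h (sofD X α) (sofD_ne hX α) (sofD_dir hX α) (sofD_cov hX α)
    obtain ⟨x, hx, hb⟩ := hγ
    exact ⟨x, hx, hβγ.trans hb⟩
  · rintro ⟨x, hx, hb⟩ G hne hdir hsub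
    obtain ⟨γ, hγ, hxγ⟩ := Set.mem_iUnion₂.mp (hsub hx)
    exact ⟨γ, hγ, fun y hy => γ.2.2.1 (hb hy) hxγ⟩

lemma sof_wb_iff (hX : IsContDomain X) (α β : SOF X) :
    wayBelow β α ↔ ∃ x ∈ α.1, β.1 ⊆ {y | x ≤ y} := by
  rw [← sof_char hX]
  constructor
  · intro h G hne hdir hsub
    exact h G hne hdir _ (sof_iUnion_isLUB hne hdir) hsub
  · intro h D hne hdir s hs hαs
    have hsle : s ≤ (⟨⋃ γ ∈ D, γ.1, sof_iUnion hne hdir⟩ : SOF X) :=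
      hs.2 (sof_iUnion_isLUB hne hdir).1
    obtain ⟨γ, hγ, hβγ⟩ := h D hne hdir (fun y hy => hsle (hαs hy))
    exact ⟨γ, hγ, hβγ⟩

end Aux

/-- For a domain `X`, the poset `FX` of Scott-open filters is a continuous dcpo
whose way-below relation (directed suprema in `FX` being unions) is:
`β ≪ α` iff there is `x ∈ α` with `β ⊆ ↑x`. -/
theorem stmt_16 {X : Type*} [PartialOrder X] (hX : IsContDomain X) :
    IsContDomain (SOF X) ∧
    ∀ α β : SOF X,
      ((∀ G : Set (SOF X), G.Nonempty → DirectedOn (· ≤ ·) G →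
          α.1 ⊆ ⋃ γ ∈ G, γ.1 → ∃ γ ∈ G, β.1 ⊆ γ.1) ↔
        ∃ x ∈ α.1, β.1 ⊆ {y | x ≤ y}) := by
  refine ⟨⟨?_, ?_⟩, fun α β => sof_char hX α β⟩
  · -- dcpo
    intro D hne hdir
    exact ⟨_, sof_iUnion_isLUB hne hdir⟩
  · -- continuity
    intro α
    have hset : {β : SOF X | wayBelow β α} = sofD X α := by
      ext β
      exact (sof_wb_iff hX α β)
    rw [hset]
    refine ⟨sofD_ne hX α, sofD_dir hX α, ?_, ?_⟩
    · rintro β ⟨x, hx, hb⟩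
      exact fun y hy => α.2.2.1 (hb hy) hx
    · intro u hu y hy
      obtain ⟨γ, hγ, hyγ⟩ := Set.mem_iUnion₂.mp (sofD_cov hX α hy)
      exact hu hγ hyγ
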